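/- arXiv:2001.02468 — 5 statements merged into one kernel-verified Lean document; each statement's English description precedes it below -/
import Mathlib

section
/- Let F : ℝ → ℝ be C² and let u : ℝ → ℝ be a bounded C³ solution of u'' = F'(u). Set c_u := infimum over y ∈ ℝ of F(u(y)). Then for every x ∈ ℝ, (1/2)(u'(x))² ≤ F(u(x)) − c_u. -/
/-- If `deriv u ≥ ε > 0` everywhere, then `u` is unbounded. -/
lemma unbdd_of_deriv_ge (u : ℝ → ℝ) (hu : Differentiable ℝ u) (M : ℝ)
    (hb : ∀ x, |u x| ≤ M) (ε : ℝ) (hε : 0 < ε) (h : ∀ x, ε ≤ deriv u x) : False := by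
  set v : ℝ → ℝ := fun x => u x - ε * x with hv
  have hvd : Differentiable ℝ v := hu.sub ((differentiable_id.const_mul ε))
  have hmono : Monotone v := by
    apply monotone_of_deriv_nonneg hvd
    intro x
    have hvx : HasDerivAt v (deriv u x - ε) x := by
      have := (hu x).hasDerivAt.sub ((hasDerivAt_id x).const_mul ε)
      simp only [mul_one] at this
      exact this
    rw [hvx.deriv]
    linarith [h x]
  have hM0 : 0 ≤ M := le_trans (abs_nonneg _) (hb 0)
  set x := (2 * M + 1) / ε with hx
  have hx0 : (0 : ℝ) ≤ x := by positivity
  have h1 : v 0 ≤ v x := hmono hx0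
  have h2 : ε * x = 2 * M + 1 := by
    rw [hx]; field_simp
  have h3 : u x ≥ u 0 + (2 * M + 1) := by
    have := h1
    simp only [hv] at this
    simp at this
    linarith
  have h4 := hb x
  have h5 := hb 0
  rw [abs_le] at h4 h5
  linarith [h4.1, h4.2, h5.1, h5.2]

/-- A bounded differentiable function with continuous derivative has points
where the derivative is arbitrarily small. -/
lemma exists_deriv_small (u : ℝ → ℝ) (hu : Differentiable ℝ u)
    (hc : Continuous (deriv u)) (M : ℝ) (hb : ∀ x, |u x| ≤ M)
    (ε : ℝ) (hε : 0 < ε) : ∃ y, |deriv u y| < ε := by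
  by_contra hcon
  push_neg at hcon
  -- deriv u never vanishes, hence by IVT has constant sign
  have hne : ∀ x, deriv u x ≠ 0 := by
    intro x hx
    have := hcon x
    rw [hx] at this
    simp at this
    linarith
  have hsign : (∀ x, ε ≤ deriv u x) ∨ (∀ x, deriv u x ≤ -ε) := by
    rcases lt_or_gt_of_ne (hne 0) with h0 | h0
    · right
      intro x
      by_contra hx
      push_neg at hx
      have hx' : ε ≤ deriv u x := by
        have := hcon x
        rcases le_abs.mp this with h | h
        · exact h
        · linarith
      -- IVT between 0 and x : deriv u takes value 0
      have : (0 : ℝ) ∈ Set.uIcc (deriv u 0) (deriv u x) := by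
        apply Set.mem_uIcc.mpr
        left
        constructor <;> linarith
      obtain ⟨z, _, hz⟩ := intermediate_value_uIcc (hc.continuousOn (s := Set.uIcc 0 x)) this
      exact hne z hz
    · left
      intro x
      by_contra hx
      push_neg at hx
      have hx' : deriv u x ≤ -ε := by
        have := hcon x
        rcases le_abs.mp this with h | h
        · linarith
        · linarith
      have : (0 : ℝ) ∈ Set.uIcc (deriv u 0) (deriv u x) := by
        apply Set.mem_uIcc.mpr
        right
        constructor <;> linarith
      obtain ⟨z, _, hz⟩ := intermediate_value_uIcc (hc.continuousOn (s := Set.uIcc 0 x)) this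
      exact hne z hz
  rcases hsign with h | h
  · exact unbdd_of_deriv_ge u hu M hb ε hε h
  · apply unbdd_of_deriv_ge (fun x => -u x) hu.neg M (fun x => by simp [abs_neg]; exact hb x) ε hε
    intro x
    rw [deriv.fun_neg]
    linarith [h x]

theorem stmt_2 (F u : ℝ → ℝ) (hF : ContDiff ℝ 2 F) (hu : ContDiff ℝ 3 u)
    (hbdd : ∃ M : ℝ, ∀ x : ℝ, |u x| ≤ M)
    (hode : ∀ x : ℝ, deriv (deriv u) x = deriv F (u x)) :
    ∀ x : ℝ, (1/2) * (deriv u x)^2 ≤ F (u x) - ⨅ y : ℝ, F (u y) := by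
  obtain ⟨M, hb⟩ := hbdd
  have hu1 : Differentiable ℝ u := hu.differentiable (by norm_num)
  have hu3 : ContDiff ℝ ((2 : ℕ∞) + 1) u := by exact_mod_cast hu
  have hdu : ContDiff ℝ 2 (deriv u) := (contDiff_succ_iff_deriv.mp hu3).2.2
  have hdu1 : Differentiable ℝ (deriv u) := hdu.differentiable (by norm_num)
  have hF1 : Differentiable ℝ F := hF.differentiable (by norm_num)
  -- the energy is constant
  set E : ℝ → ℝ := fun x => (1/2) * (deriv u x)^2 - F (u x) with hE
  have hEderiv : ∀ x, HasDerivAt E 0 x := by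
    intro x
    have h1 : HasDerivAt (deriv u) (deriv F (u x)) x := by
      rw [← hode x]; exact (hdu1 x).hasDerivAt
    have h2 : HasDerivAt (fun x => (deriv u x)^2) (2 * (deriv u x)^1 * deriv F (u x)) x :=
      h1.pow 2
    have h3 : HasDerivAt (fun x => F (u x)) (deriv F (u x) * deriv u x) x :=
      ((hF1 (u x)).hasDerivAt).comp x (hu1 x).hasDerivAt
    have h4 := (h2.const_mul (1/2 : ℝ)).sub h3
    convert h4 using 1
    · rfl
    · rfl
    · rfl
    · ring
  have hEdiff : Differentiable ℝ E := fun x => (hEderiv x).differentiableAt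
  have hEconst : ∀ x y, E x = E y :=
    is_const_of_deriv_eq_zero hEdiff (fun x => (hEderiv x).deriv)
  obtain ⟨e, hEe⟩ : ∃ e : ℝ, ∀ x, (1/2) * (deriv u x)^2 - F (u x) = e :=
    ⟨E 0, fun x => hEconst x 0⟩
  -- F ∘ u is bounded below
  have hbdd' : BddBelow (Set.range fun y => F (u y)) := by
    refine ⟨-e, ?_⟩
    rintro z ⟨y, rfl⟩
    have := hEe y
    nlinarith [sq_nonneg (deriv u y)]
  -- the infimum is ≤ -e
  have hinf : (⨅ y : ℝ, F (u y)) ≤ -e := by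
    apply le_of_forall_pos_le_add
    intro ε hεpos
    obtain ⟨y, hy⟩ := exists_deriv_small u hu1 hdu.continuous M hb (Real.sqrt (2 * ε))
      (Real.sqrt_pos.mpr (by linarith))
    have hy2 : (deriv u y)^2 < 2 * ε := by
      have h := abs_lt.mp hy
      nlinarith [Real.sq_sqrt (by linarith : (0:ℝ) ≤ 2 * ε), Real.sqrt_nonneg (2 * ε),
        abs_nonneg (deriv u y), sq_abs (deriv u y)]
    have hFy : F (u y) < -e + ε := by
      have := hEe y
      nlinarith
    exact le_trans (ciInf_le hbdd' y) (le_of_lt hFy)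
  intro x
  have := hEe x
  linarith
end

section
/- Let u : ℝ → ℝ be a bounded C³ solution of u'' = F'(u) for some C² function F. Then u' is bounded on ℝ and the infimum of |u'| over ℝ equals 0. -/
theorem stmt_3 (F u : ℝ → ℝ) (hF : ContDiff ℝ 2 F) (hu : ContDiff ℝ 3 u)
    (hbdd : ∃ M : ℝ, ∀ x : ℝ, |u x| ≤ M)
    (hode : ∀ x : ℝ, deriv (deriv u) x = deriv F (u x)) :
    (∃ C : ℝ, ∀ x : ℝ, |deriv u x| ≤ C) ∧ (⨅ x : ℝ, |deriv u x|) = 0 := by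
  obtain ⟨M, hM⟩ := hbdd
  have hM0 : 0 ≤ M := le_trans (abs_nonneg _) (hM 0)
  have hudiff : Differentiable ℝ u := hu.differentiable (by norm_num)
  have hdu : ContDiff ℝ 2 (deriv u) := (contDiff_succ_iff_deriv.mp (show ContDiff ℝ (2+1) u from hu)).2.2
  have hdudiff : Differentiable ℝ (deriv u) := hdu.differentiable (by norm_num)
  have hFdiff : Differentiable ℝ F := hF.differentiable (by norm_num)
  -- Energy is constant
  set E : ℝ → ℝ := fun x => (deriv u x)^2 - 2 * F (u x) with hE
  have hEderiv : ∀ x, HasDerivAt E 0 x := by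
    intro x
    have h1 : HasDerivAt u (deriv u x) x := (hudiff x).hasDerivAt
    have h2 : HasDerivAt (deriv u) (deriv (deriv u) x) x := (hdudiff x).hasDerivAt
    have h3 : HasDerivAt F (deriv F (u x)) (u x) := (hFdiff (u x)).hasDerivAt
    have hsq : HasDerivAt (fun y => (deriv u y)^2) (2 * deriv u x * deriv (deriv u) x) x := by
      simpa [mul_comm] using h2.fun_pow 2
    have hFu : HasDerivAt (fun y => F (u y)) (deriv F (u x) * deriv u x) x :=
      h3.comp x h1
    have := hsq.sub (hFu.const_mul 2)
    have heq : 2 * deriv u x * deriv (deriv u) x - 2 * (deriv F (u x) * deriv u x) = 0 := by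
      rw [hode x]; ring
    rw [heq] at this
    exact this
  have hEconst : ∀ x, E x = E 0 := by
    intro x
    exact is_const_of_deriv_eq_zero (fun y => (hEderiv y).differentiableAt)
      (fun y => (hEderiv y).deriv) x 0
  -- F ∘ u bounded
  obtain ⟨K, hK⟩ : ∃ K, ∀ y ∈ Set.Icc (-M) M, ‖F y‖ ≤ K := by
    rcases (isCompact_Icc (a := -M) (b := M)).exists_bound_of_continuousOn
      hFdiff.continuous.continuousOn with ⟨K, hK⟩
    exact ⟨K, hK⟩
  have hFu_bdd : ∀ x, |F (u x)| ≤ K := fun x => hK (u x) (abs_le.mp (hM x))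
  constructor
  · refine ⟨Real.sqrt (E 0 + 2 * K), fun x => ?_⟩
    have h2 : (deriv u x)^2 ≤ E 0 + 2 * K := by
      have h1 := hEconst x
      simp only [hE] at h1
      have := (abs_le.mp (hFu_bdd x)).2
      simp only [hE]
      linarith
    calc |deriv u x| = Real.sqrt ((deriv u x)^2) := by rw [Real.sqrt_sq_eq_abs]
      _ ≤ Real.sqrt (E 0 + 2 * K) := Real.sqrt_le_sqrt h2
  · have hbdd : BddBelow (Set.range fun x => |deriv u x|) :=
      ⟨0, by rintro y ⟨x, rfl⟩; exact abs_nonneg _⟩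
    have hge : (0:ℝ) ≤ ⨅ x, |deriv u x| := le_ciInf (fun x => abs_nonneg _)
    have hle : (⨅ x : ℝ, |deriv u x|) ≤ 0 := by
      apply le_of_forall_pos_le_add
      intro ε hε
      rw [zero_add]
      set b : ℝ := (2 * M + 1) / ε with hb
      have hbpos : 0 < b := div_pos (by linarith) hε
      obtain ⟨c, _, hc⟩ := exists_deriv_eq_slope u hbpos
        hudiff.continuous.continuousOn hudiff.differentiableOn
      refine le_trans (ciInf_le hbdd c) ?_
      rw [hc]
      have hnum : |u b - u 0| ≤ 2 * M := by
        have := hM b; have := hM 0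
        rw [abs_sub_le_iff]
        constructor <;> [linarith [abs_le.mp (hM b), abs_le.mp (hM 0)];
          linarith [abs_le.mp (hM b), abs_le.mp (hM 0)]]
      rw [abs_div, abs_of_pos (by linarith : (0:ℝ) < b - 0)]
      rw [div_le_iff₀ (by linarith)]
      calc |u b - u 0| ≤ 2 * M := hnum
        _ ≤ ε * (b - 0) := by
          have : ε * (b - 0) = 2 * M + 1 := by
            rw [sub_zero, hb]; field_simp
          linarith
    linarith
end

section
/- Let F : ℝ → ℝ be continuous and suppose α ∈ ℝ satisfies: there exist k ≥ 0 and δ > 0 such that F(s) − F(α) ≤ k(s−α)² whenever |s−α| < δ. Let u : ℝ → ℝ be C¹ with (1/2)(u'(x))² ≤ F(u(x)) − F(α) for all x, and suppose u(x₀) = α for some x₀. Then u(x) = α for all x with |x − x₀| chosen so that u stays in the δ-neighborhood; in fact, if |u(x) − α| < δ for all x in an interval I containing x₀, then u ≡ α on I. -/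
open Set Real

lemma aux_gronwall_zero (K : ℝ) (f f' : ℝ → ℝ) (hf : ∀ x, HasDerivAt f (f' x) x)
    (a b : ℝ) (bound : ∀ x ∈ Set.Icc a b, |f' x| ≤ K * |f x|) (ha : f a = 0) :
    ∀ x ∈ Set.Icc a b, f x = 0 := by
  intro x hx
  have h := norm_le_gronwallBound_of_norm_deriv_right_le (f := f) (f' := f')
    (δ := 0) (K := K) (ε := 0) (a := a) (b := b)
    (fun y _ => (hf y).continuousAt.continuousWithinAt)
    (fun y _ => (hf y).hasDerivWithinAt)
    (by simp [ha])
    (fun y hy => by simpa using bound y (Set.Ico_subset_Icc_self hy))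
    x hx
  rw [gronwallBound_ε0_δ0] at h
  have := abs_nonneg (f x)
  simpa [abs_eq_zero] using le_antisymm (by simpa using h) (abs_nonneg (f x))

theorem stmt_4 (F : ℝ → ℝ) (hF : Continuous F) (α k δ : ℝ) (hk : 0 ≤ k) (hδ : 0 < δ)
    (hquad : ∀ s : ℝ, |s - α| < δ → F s - F α ≤ k * (s - α)^2)
    (u : ℝ → ℝ) (hu : ContDiff ℝ 1 u)
    (hgrad : ∀ x : ℝ, (1/2) * (deriv u x)^2 ≤ F (u x) - F α)
    (I : Set ℝ) (hI : I.OrdConnected) (x₀ : ℝ) (hx₀ : x₀ ∈ I) (hu₀ : u x₀ = α)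
    (hclose : ∀ x ∈ I, |u x - α| < δ) :
    ∀ x ∈ I, u x = α := by
  have hdiff : Differentiable ℝ u := hu.differentiable one_ne_zero
  set K := Real.sqrt (2 * k) with hK
  -- key pointwise bound on I
  have key : ∀ x ∈ I, |deriv u x| ≤ K * |u x - α| := by
    intro x hxI
    have h1 : (deriv u x)^2 ≤ 2 * k * (u x - α)^2 := by
      have := hgrad x
      have h2 := hquad (u x) (hclose x hxI)
      nlinarith
    have h3 : (K * |u x - α|)^2 = 2 * k * (u x - α)^2 := by
      rw [mul_pow, sq_abs, hK, Real.sq_sqrt (by linarith)]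
    exact abs_le.mpr (abs_le_of_sq_le_sq' (h3 ▸ h1) (by positivity))
  intro x hxI
  rcases le_total x₀ x with hle | hle
  · have sub : Set.Icc x₀ x ⊆ I := hI.out hx₀ hxI
    have := aux_gronwall_zero K (fun t => u t - α) (deriv u)
      (fun t => ((hdiff t).hasDerivAt).sub_const α) x₀ x
      (fun t ht => key t (sub ht)) (by simp [hu₀]) x (by simp [hle])
    have h0 : u x - α = 0 := this
    linarith
  · have sub : Set.Icc x x₀ ⊆ I := hI.out hxI hx₀
    -- reflect: g t = u (x + x₀ - t) - α
    have := aux_gronwall_zero K (fun t => u (x + x₀ - t) - α) (fun t => -deriv u (x + x₀ - t))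
      (fun t => by
        have h1 : HasDerivAt (fun t : ℝ => x + x₀ - t) (-1) t := by
          simpa using (hasDerivAt_id t).const_sub (x + x₀)
        simpa using (((hdiff (x + x₀ - t)).hasDerivAt).comp t h1).sub_const α)
      x x₀
      (fun t ht => by
        have hmem : x + x₀ - t ∈ Set.Icc x x₀ := by
          simp only [Set.mem_Icc] at ht ⊢; constructor <;> linarith
        simpa using key _ (sub hmem))
      (by simp [hu₀]) x₀ (by simp [hle])
    have h0 : u (x + x₀ - x₀) - α = 0 := this
    rw [show x + x₀ - x₀ = x by ring] at h0
    linarith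
end

section
/- Let u : ℝ → ℝ be a bounded nonconstant C³ solution of u'' = F'(u) with F ∈ C². Set m = inf u, M = sup u, and c_u = inf over y of F(u(y)). Then c_u = min(F(m), F(M)), and F(t) > c_u for every t with m < t < M. -/
open Set

lemma aux_gronwall {f f' : ℝ → ℝ} {K a b : ℝ}
    (hd : ∀ x, HasDerivAt f (f' x) x)
    (h0 : f a = 0)
    (hb : ∀ x ∈ Set.Icc a b, |f' x| ≤ K * |f x|) :
    ∀ x ∈ Set.Icc a b, f x = 0 := by
  intro x hx
  have := norm_le_gronwallBound_of_norm_deriv_right_le (f := f) (f' := f')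
    (δ := 0) (K := K) (ε := 0) (a := a) (b := b)
    (fun y _ => (hd y).continuousAt.continuousWithinAt)
    (fun y _ => (hd y).hasDerivWithinAt)
    (by simp [h0])
    (fun y hy => by
      simpa [Real.norm_eq_abs] using hb y ⟨hy.1, hy.2.le⟩)
    x hx
  rw [gronwallBound_ε0_δ0] at this
  have h2 : |f x| ≤ 0 := by simpa [Real.norm_eq_abs] using this
  exact abs_eq_zero.mp (le_antisymm h2 (abs_nonneg _))

lemma aux_gronwall_left {f f' : ℝ → ℝ} {K a b : ℝ}
    (hd : ∀ x, HasDerivAt f (f' x) x)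
    (h0 : f b = 0)
    (hb : ∀ x ∈ Set.Icc a b, |f' x| ≤ K * |f x|) :
    ∀ x ∈ Set.Icc a b, f x = 0 := by
  intro x hx
  have hmem : ∀ y ∈ Set.Icc a b, a + b - y ∈ Set.Icc a b := by
    intro y hy
    exact ⟨by linarith [hy.2], by linarith [hy.1]⟩
  have hg : ∀ y, HasDerivAt (fun y => f (a + b - y)) (-(f' (a + b - y))) y := by
    intro y
    have h1 : HasDerivAt (fun y : ℝ => a + b - y) (-1) y := (hasDerivAt_id y).const_sub (a + b)
    have := (hd (a + b - y)).comp y h1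
    exact this.congr_deriv (by ring)
  have := aux_gronwall (f := fun y => f (a + b - y)) (f' := fun y => -(f' (a + b - y)))
    (K := K) (a := a) (b := b) hg
    (by simp [h0])
    (fun y hy => by simpa using hb _ (hmem y hy))
    (a + b - x) (hmem x hx)
  simpa using this

lemma aux_unbdd {u u' : ℝ → ℝ} {ε B : ℝ} (hε : 0 < ε)
    (hd : ∀ x, HasDerivAt u (u' x) x) (hlow : ∀ x, ε ≤ u' x)
    (hB : ∀ x, |u x| ≤ B) : False := by
  have hder : ∀ x, HasDerivAt (fun x => u x - ε * x) (u' x - ε) x := by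
    intro x
    have h2 : HasDerivAt (fun x : ℝ => ε * x) ε x := by
      simpa using (hasDerivAt_id x).const_mul ε
    exact (hd x).sub h2
  have mono : Monotone (fun x => u x - ε * x) := by
    apply monotone_of_deriv_nonneg (fun x => (hder x).differentiableAt)
    intro x
    rw [(hder x).deriv]
    linarith [hlow x]
  have hB0 : 0 ≤ B := (abs_nonneg _).trans (hB 0)
  set x := (2 * B + 1) / ε with hxdef
  have hx0 : (0:ℝ) ≤ x := by positivity
  have h1 : u 0 - ε * 0 ≤ u x - ε * x := mono hx0
  have hεx : ε * x = 2 * B + 1 := by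
    rw [hxdef]; field_simp
  have h2 := (abs_le.mp (hB x)).2
  have h3 := (abs_le.mp (hB 0)).1
  nlinarith

theorem stmt_8 (F u : ℝ → ℝ) (hF : ContDiff ℝ 2 F) (hu : ContDiff ℝ 3 u)
    (hbdd : ∃ M : ℝ, ∀ x : ℝ, |u x| ≤ M)
    (hnc : ∃ a b : ℝ, u a ≠ u b)
    (hode : ∀ x : ℝ, deriv (deriv u) x = deriv F (u x)) :
    (⨅ y : ℝ, F (u y)) = min (F (⨅ x : ℝ, u x)) (F (⨆ x : ℝ, u x)) ∧
    (∀ t : ℝ, (⨅ x : ℝ, u x) < t → t < (⨆ x : ℝ, u x) →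
      (⨅ y : ℝ, F (u y)) < F t) := by
  obtain ⟨B, hB⟩ := hbdd
  have hud : Differentiable ℝ u := hu.differentiable (by norm_num)
  have hu2 : ContDiff ℝ 2 (deriv u) :=
    (contDiff_succ_iff_deriv.mp (show ContDiff ℝ (2+1 : ℕ) u by exact_mod_cast hu)).2.2
  have hu'd : Differentiable ℝ (deriv u) := hu2.differentiable (by norm_num)
  have hFd : Differentiable ℝ F := hF.differentiable (by norm_num)
  have hF1 : ContDiff ℝ 1 (deriv F) :=
    (contDiff_succ_iff_deriv.mp (show ContDiff ℝ (1+1 : ℕ) F by exact_mod_cast hF)).2.2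
  have hF'd : Differentiable ℝ (deriv F) := hF1.differentiable (by norm_num)
  have hF''c : Continuous (deriv (deriv F)) := by
    have h0 : ContDiff ℝ ((0:ℕ)+1) (deriv F) := by exact_mod_cast hF1
    exact (contDiff_succ_iff_deriv.mp h0).2.2.continuous
  -- energy conservation
  set E := F (u 0) - (deriv u 0) ^ 2 / 2 with hEdef
  have energy : ∀ x, F (u x) = (deriv u x) ^ 2 / 2 + E := by
    have hh : ∀ x, HasDerivAt (fun x => (deriv u x) ^ 2 / 2 - F (u x)) 0 x := by
      intro x
      have h1 : HasDerivAt (fun x => (deriv u x) ^ 2 / 2)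
          (deriv u x * deriv (deriv u) x) x := by
        have := ((hu'd x).hasDerivAt.pow 2).div_const 2
        exact this.congr_deriv (by norm_num; ring)
      have h2 : HasDerivAt (fun x => F (u x)) (deriv F (u x) * deriv u x) x :=
        (hFd (u x)).hasDerivAt.comp x (hud x).hasDerivAt
      have h3 := h1.sub h2
      exact h3.congr_deriv (by rw [hode x]; ring)
    have hcon := is_const_of_deriv_eq_zero (f := fun x => (deriv u x) ^ 2 / 2 - F (u x))
      (fun x => (hh x).differentiableAt) (fun x => (hh x).deriv)
    intro x
    have := hcon x 0
    rw [hEdef]; linarith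
  clear_value E
  -- basic bounds
  have hBa : BddAbove (Set.range u) := ⟨B, by rintro _ ⟨x, rfl⟩; exact (abs_le.mp (hB x)).2⟩
  have hBb : BddBelow (Set.range u) := ⟨-B, by rintro _ ⟨x, rfl⟩; exact (abs_le.mp (hB x)).1⟩
  set m := ⨅ x, u x with hmdef
  set M := ⨆ x, u x with hMdef
  clear_value m M
  have hmle : ∀ x, m ≤ u x := fun x => by rw [hmdef]; exact ciInf_le hBb x
  have hleM : ∀ x, u x ≤ M := fun x => by rw [hMdef]; exact le_ciSup hBa x
  have hEle : ∀ y, E ≤ F (u y) := fun y => by nlinarith [sq_nonneg (deriv u y), energy y]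
  set c := ⨅ y, F (u y) with hcdef
  clear_value c
  have hFrb : BddBelow (Set.range fun y => F (u y)) :=
    ⟨E, by rintro _ ⟨y, rfl⟩; exact hEle y⟩
  -- c = E
  have hcE : c = E := by
    refine le_antisymm ?_ (by rw [hcdef]; exact le_ciInf hEle)
    by_contra hlt
    push_neg at hlt
    have hd : ∀ y, 2 * (c - E) ≤ (deriv u y) ^ 2 := by
      intro y
      have h1 : c ≤ F (u y) := by rw [hcdef]; exact ciInf_le hFrb y
      nlinarith [energy y]
    have hdpos : 0 < 2 * (c - E) := by linarith
    have hne : ∀ y, deriv u y ≠ 0 := by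
      intro y hy
      have := hd y
      rw [hy] at this
      nlinarith
    have hsd : 0 < Real.sqrt (2 * (c - E)) := Real.sqrt_pos.mpr hdpos
    rcases lt_or_gt_of_ne (hne 0) with h0 | h0
    · have hpos : ∀ y, deriv u y < 0 := by
        intro y
        by_contra hy
        push_neg at hy
        obtain ⟨z, hz⟩ := intermediate_value_univ 0 y hu2.continuous
          (⟨h0.le, hy⟩ : (0:ℝ) ∈ Icc (deriv u 0) (deriv u y))
        exact hne z hz
      refine aux_unbdd (u := fun x => -u x) (u' := fun x => -deriv u x)
        (ε := Real.sqrt (2 * (c - E))) (B := B) hsd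
        (fun x => (hud x).hasDerivAt.neg) ?_ (fun x => by simpa using hB x)
      intro x
      have h1 : Real.sqrt (2 * (c - E)) ≤ Real.sqrt ((deriv u x) ^ 2) :=
        Real.sqrt_le_sqrt (hd x)
      rwa [Real.sqrt_sq_eq_abs, abs_of_neg (hpos x)] at h1
    · have hpos : ∀ y, 0 < deriv u y := by
        intro y
        by_contra hy
        push_neg at hy
        obtain ⟨z, hz⟩ := intermediate_value_univ y 0 hu2.continuous
          (⟨hy, h0.le⟩ : (0:ℝ) ∈ Icc (deriv u y) (deriv u 0))
        exact hne z hz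
      refine aux_unbdd (u := u) (u' := deriv u)
        (ε := Real.sqrt (2 * (c - E))) (B := B) hsd
        (fun x => (hud x).hasDerivAt) ?_ hB
      intro x
      have h1 : Real.sqrt (2 * (c - E)) ≤ Real.sqrt ((deriv u x) ^ 2) :=
        Real.sqrt_le_sqrt (hd x)
      rwa [Real.sqrt_sq_eq_abs, abs_of_pos (hpos x)] at h1
  -- m < M
  have hmM : m < M := by
    obtain ⟨a, b, hab⟩ := hnc
    by_contra h
    push_neg at h
    exact hab (le_antisymm ((hleM a).trans (h.trans (hmle b)))
      ((hleM b).trans (h.trans (hmle a))))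
  -- interior values attained
  have hsurj : ∀ t, m < t → t < M → ∃ x, u x = t := by
    intro t h1 h2
    rw [hmdef] at h1
    rw [hMdef] at h2
    obtain ⟨a, ha⟩ := exists_lt_of_ciInf_lt h1
    obtain ⟨b, hb2⟩ := exists_lt_of_lt_ciSup h2
    exact intermediate_value_univ a b hu.continuous ⟨ha.le, hb2.le⟩
  -- E ≤ F on [m, M]
  have hFge : ∀ t ∈ Set.Icc m M, E ≤ F t := by
    have hclosed : IsClosed {t : ℝ | E ≤ F t} := isClosed_le continuous_const hF.continuous
    have hsub : Set.Ioo m M ⊆ {t : ℝ | E ≤ F t} := by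
      intro t ht
      obtain ⟨x, hx⟩ := hsurj t ht.1 ht.2
      exact hx ▸ hEle x
    intro t ht
    have h1 : Set.Icc m M ⊆ closure (Set.Ioo m M) := by
      rw [closure_Ioo hmM.ne]
    exact hclosed.closure_subset_iff.mpr hsub (h1 ht)
  -- key: E < F t strictly in the interior
  have hkey : ∀ t, m < t → t < M → E < F t := by
    intro t ht1 ht2
    refine lt_of_le_of_ne (hFge t ⟨ht1.le, ht2.le⟩) ?_
    intro hFt  -- E = F t
    have hloc : IsLocalMin F t := by
      have hmem : Set.Icc m M ∈ nhds t := Icc_mem_nhds ht1 ht2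
      exact Filter.eventually_of_mem hmem (fun s hs => hFt ▸ hFge s hs)
    have hF't : deriv F t = 0 := hloc.deriv_eq_zero
    obtain ⟨L, hL⟩ := (isCompact_Icc (a := t - 1) (b := t + 1)).exists_bound_of_continuousOn
      hF''c.continuousOn
    have hL0 : 0 ≤ L := (norm_nonneg _).trans (hL t (by constructor <;> linarith))
    have hF'bd : ∀ s ∈ Set.Icc (t - 1) (t + 1), |deriv F s| ≤ L * |s - t| := by
      intro s hs
      have := Convex.norm_image_sub_le_of_norm_deriv_le (f := deriv F)
        (s := Set.Icc (t - 1) (t + 1)) (C := L)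
        (fun x _ => hF'd x) hL (convex_Icc _ _) (⟨by linarith, by linarith⟩ : t ∈ Icc (t-1) (t+1)) hs
      simpa [Real.norm_eq_abs, hF't] using this
    have hFbd : ∀ s ∈ Set.Icc (t - 1) (t + 1), |F s - F t| ≤ L * (s - t) ^ 2 := by
      intro s hs
      have h1 : |s - t| ≤ 1 := by
        rw [abs_le]; exact ⟨by linarith [hs.1], by linarith [hs.2]⟩
      have hsub2 : Set.Icc (t - |s - t|) (t + |s - t|) ⊆ Set.Icc (t - 1) (t + 1) := by
        intro x hx
        exact ⟨by linarith [hx.1], by linarith [hx.2]⟩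
      have hC : ∀ x ∈ Set.Icc (t - |s - t|) (t + |s - t|), ‖deriv F x‖ ≤ L * |s - t| := by
        intro x hx
        have h2 : |x - t| ≤ |s - t| := by
          rw [abs_le]; exact ⟨by linarith [hx.1], by linarith [hx.2]⟩
        calc ‖deriv F x‖ ≤ L * |x - t| := hF'bd x (hsub2 hx)
          _ ≤ L * |s - t| := by nlinarith
      have := Convex.norm_image_sub_le_of_norm_deriv_le (f := F)
        (s := Set.Icc (t - |s - t|) (t + |s - t|)) (C := L * |s - t|)
        (fun x _ => hFd x) hC (convex_Icc _ _)
        (⟨by linarith [abs_nonneg (s - t)], by linarith [abs_nonneg (s - t)]⟩ :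
          t ∈ Icc (t - |s - t|) (t + |s - t|))
        (⟨by linarith [neg_abs_le (s - t)], by linarith [le_abs_self (s - t)]⟩ :
          s ∈ Icc (t - |s - t|) (t + |s - t|))
      calc |F s - F t| ≤ L * |s - t| * ‖s - t‖ := this
        _ = L * (s - t) ^ 2 := by rw [Real.norm_eq_abs, mul_assoc, abs_mul_abs_self, sq]
    set K := Real.sqrt (2 * L) with hKdef
    have hKbd : ∀ x, |u x - t| ≤ 1 → |deriv u x| ≤ K * |u x - t| := by
      intro x hx
      have hmem : u x ∈ Set.Icc (t - 1) (t + 1) := by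
        rw [abs_le] at hx
        exact ⟨by linarith [hx.1], by linarith [hx.2]⟩
      have h1 : (deriv u x) ^ 2 = 2 * (F (u x) - F t) := by
        have h := energy x
        rw [← hFt]; linarith
      have h2 : F (u x) - F t ≤ L * (u x - t) ^ 2 := by
        linarith [le_abs_self (F (u x) - F t), hFbd (u x) hmem]
      have h3 : (deriv u x) ^ 2 ≤ 2 * L * (u x - t) ^ 2 := by nlinarith
      calc |deriv u x| = Real.sqrt ((deriv u x) ^ 2) := (Real.sqrt_sq_eq_abs _).symm
        _ ≤ Real.sqrt (2 * L * (u x - t) ^ 2) := Real.sqrt_le_sqrt h3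
        _ = K * |u x - t| := by
            rw [Real.sqrt_mul (by positivity), Real.sqrt_sq_eq_abs]
    set S := {x : ℝ | u x = t} with hSdef
    obtain ⟨x0, hx0⟩ := hsurj t ht1 ht2
    have hSne : S.Nonempty := ⟨x0, hx0⟩
    have hScl : IsClosed S := isClosed_eq hu.continuous continuous_const
    have hSop : IsOpen S := by
      rw [Metric.isOpen_iff]
      intro x1 hx1
      have hx1' : u x1 = t := hx1
      have hcont : ContinuousAt u x1 := hu.continuous.continuousAt
      rw [Metric.continuousAt_iff] at hcont
      obtain ⟨r, hr, hrb⟩ := hcont 1 one_pos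
      refine ⟨r, hr, ?_⟩
      intro x hx
      have hxr : |x - x1| < r := by simpa [Real.dist_eq] using hx
      have hball : ∀ y, |y - x1| < r → |u y - t| ≤ 1 := by
        intro y hy
        have := hrb (show dist y x1 < r by rwa [Real.dist_eq])
        rw [Real.dist_eq, hx1'] at this
        exact this.le
      rcases le_or_gt x1 x with hle | hlt
      · have := aux_gronwall (f := fun y => u y - t) (f' := deriv u) (K := K)
          (a := x1) (b := x)
          (fun y => (hud y).hasDerivAt.sub_const t)
          (by simp [hx1'])
          (fun y hy => hKbd y (hball y (by
            rw [abs_lt] at hxr ⊢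
            exact ⟨by linarith [hy.1], by linarith [hy.2]⟩)))
          x ⟨hle, le_refl x⟩
        have h9 : u x - t = 0 := this
        show u x = t
        linarith
      · have := aux_gronwall_left (f := fun y => u y - t) (f' := deriv u) (K := K)
          (a := x) (b := x1)
          (fun y => (hud y).hasDerivAt.sub_const t)
          (by simp [hx1'])
          (fun y hy => hKbd y (hball y (by
            rw [abs_lt] at hxr ⊢
            exact ⟨by linarith [hy.1], by linarith [hy.2]⟩)))
          x ⟨le_refl x, hlt.le⟩
        have h9 : u x - t = 0 := this
        show u x = t
        linarith
    have huniv : S = Set.univ := IsClopen.eq_univ ⟨hScl, hSop⟩ hSne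
    obtain ⟨a, b, hab⟩ := hnc
    have ha : u a = t := by
      have : a ∈ S := huniv ▸ Set.mem_univ a
      exact this
    have hb : u b = t := by
      have : b ∈ S := huniv ▸ Set.mem_univ b
      exact this
    exact hab (ha.trans hb.symm)
  constructor
  · -- c = min (F m) (F M)
    have h1 : E ≤ min (F m) (F M) :=
      le_min (hFge m ⟨le_refl m, hmM.le⟩) (hFge M ⟨hmM.le, le_refl M⟩)
    obtain ⟨ts, hts, htsmin⟩ := isCompact_Icc.exists_isMinOn
      (⟨m, left_mem_Icc.mpr hmM.le⟩ : (Set.Icc m M).Nonempty) hF.continuous.continuousOn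
    have h2 : F ts ≤ E := by
      rw [← hcE]
      rw [hcdef]
      exact le_ciInf (fun y => (htsmin (⟨hmle y, hleM y⟩ : u y ∈ Set.Icc m M) : F ts ≤ F (u y)))
    have h3 : F ts = E := le_antisymm h2 (hFge ts hts)
    have h4 : ts = m ∨ ts = M := by
      by_contra h
      push_neg at h
      have := hkey ts (lt_of_le_of_ne hts.1 (Ne.symm h.1)) (lt_of_le_of_ne hts.2 h.2)
      linarith
    rw [hcE]
    refine le_antisymm h1 ?_
    rcases h4 with h | h
    · rw [h] at h3
      exact (min_le_left _ _).trans h3.le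
    · rw [h] at h3
      exact (min_le_right _ _).trans h3.le
  · intro t h1 h2
    rw [hcE]
    exact hkey t h1 h2
end

section
/- Let F : ℝ → ℝ be C² with F ≥ 0 everywhere, and let u : ℝ → ℝ be a bounded C³ solution of u'' = F'(u) such that (1/2)(u'(x₀))² = F(u(x₀)) at some point x₀ with u'(x₀) ≠ 0. Then u'(x) ≠ 0 for all x ∈ ℝ; in particular u is strictly monotone. -/
open Set

theorem stmt_10 (F u : ℝ → ℝ) (hF : ContDiff ℝ 2 F) (hFpos : ∀ t : ℝ, 0 ≤ F t)
    (hu : ContDiff ℝ 3 u) (hbdd : ∃ M : ℝ, ∀ x : ℝ, |u x| ≤ M)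
    (hode : ∀ x : ℝ, deriv (deriv u) x = deriv F (u x))
    (x₀ : ℝ) (heq : (1/2) * (deriv u x₀)^2 = F (u x₀)) (hne : deriv u x₀ ≠ 0) :
    (∀ x : ℝ, deriv u x ≠ 0) ∧ (StrictMono u ∨ StrictAnti u) := by
  set w := deriv u with hw_def
  have hu_d : Differentiable ℝ u := hu.differentiable (by norm_num)
  have h32 : (3 : WithTop ℕ∞) = 2 + 1 := by norm_num
  have hw_cd : ContDiff ℝ 2 w := (contDiff_succ_iff_deriv.mp (h32 ▸ hu)).2.2
  have hw_d : Differentiable ℝ w := hw_cd.differentiable two_ne_zero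
  have h21 : (2 : WithTop ℕ∞) = 1 + 1 := by norm_num
  have hF_d : Differentiable ℝ F := hF.differentiable two_ne_zero
  have hF'_cd : ContDiff ℝ 1 (deriv F) := (contDiff_succ_iff_deriv.mp (h21 ▸ hF)).2.2
  have hF'_d : Differentiable ℝ (deriv F) := hF'_cd.differentiable one_ne_zero
  have hF''_cont : Continuous (deriv (deriv F)) := (contDiff_one_iff_deriv.mp hF'_cd).2
  have hwd : ∀ x, HasDerivAt u (w x) x := fun x => (hu_d x).hasDerivAt
  have hwd' : ∀ x, HasDerivAt w (deriv F (u x)) x := fun x => hode x ▸ (hw_d x).hasDerivAt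
  have hFu : ∀ x, HasDerivAt (fun y => F (u y)) (deriv F (u x) * w x) x :=
    fun x => (hF_d (u x)).hasDerivAt.comp x (hwd x)
  have hF'u : ∀ x, HasDerivAt (fun y => deriv F (u y)) (deriv (deriv F) (u x) * w x) x :=
    fun x => (hF'_d (u x)).hasDerivAt.comp x (hwd x)
  -- the energy is constant
  have hE : ∀ x, HasDerivAt (fun y => (1/2) * (w y)^2 - F (u y)) 0 x := by
    intro x
    have h1 : HasDerivAt (fun y => (1/2) * (w y)^2)
        ((1/2 : ℝ) * ((2 : ℕ) * w x ^ (2 - 1) * deriv F (u x))) x :=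
      ((hwd' x).pow 2).const_mul (1/2 : ℝ)
    have h2 := h1.sub (hFu x)
    have h3 : (1/2 : ℝ) * ((2 : ℕ) * w x ^ (2 - 1) * deriv F (u x)) - deriv F (u x) * w x = 0 := by
      push_cast
      ring
    rw [h3] at h2
    exact h2
  have energy : ∀ x, (1/2) * (w x)^2 = F (u x) := by
    intro x
    have := is_const_of_deriv_eq_zero (fun y => (hE y).differentiableAt)
      (fun y => (hE y).deriv) x x₀
    linarith [this]
  -- main claim
  have key : ∀ x, w x ≠ 0 := by
    intro x₁ hx1
    have hFu0 : F (u x₁) = 0 := by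
      have := energy x₁; rw [hx1] at this; linarith
    have hmin : IsLocalMin F (u x₁) :=
      Filter.Eventually.of_forall (fun t => by rw [hFu0]; exact hFpos t)
    have hdF0 : deriv F (u x₁) = 0 := hmin.deriv_eq_zero
    -- set up ODE uniqueness for (w, F'(u)) against the zero solution
    set a : ℝ := min x₁ x₀ - 1 with ha_def
    set b : ℝ := max x₁ x₀ + 1 with hb_def
    have hx₁ab : x₁ ∈ Ioo a b :=
      ⟨by rw [ha_def]; have := min_le_left x₁ x₀; linarith, by
        rw [hb_def]; have := le_max_left x₁ x₀; linarith⟩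
    have hx₀ab : x₀ ∈ Icc a b :=
      ⟨by rw [ha_def]; have := min_le_right x₁ x₀; linarith, by
        rw [hb_def]; have := le_max_right x₁ x₀; linarith⟩
    have hab : a ≤ b := le_of_lt (lt_trans hx₁ab.1 hx₁ab.2)
    set cl : ℝ → ℝ := fun t => max a (min t b) with hcl_def
    have hcl_mem : ∀ t, cl t ∈ Icc a b := fun t =>
      ⟨le_max_left _ _, max_le (hab.trans (by simp)) (min_le_right _ _)⟩
    have hcl_id : ∀ t ∈ Icc a b, cl t = t := fun t ht => by
      simp only [hcl_def]
      rw [min_eq_left ht.2, max_eq_right ht.1]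
    set c : ℝ → ℝ := fun t => deriv (deriv F) (u (cl t)) with hc_def
    obtain ⟨C, hC⟩ := (isCompact_Icc : IsCompact (Icc a b)).exists_bound_of_continuousOn
      ((hF''_cont.comp hu.continuous).continuousOn :
        ContinuousOn (fun t => deriv (deriv F) (u t)) (Icc a b))
    have hcb : ∀ t, |c t| ≤ C := fun t => by
      simpa using hC (cl t) (hcl_mem t)
    set K : NNReal := Real.toNNReal (max 1 C) with hK_def
    set v : ℝ → ℝ × ℝ → ℝ × ℝ := fun t p => (p.2, c t * p.1) with hv_def
    have hlip : ∀ t, LipschitzWith K (v t) := by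
      intro t
      have h2 : LipschitzWith (Real.toNNReal |c t|) (fun x : ℝ => c t * x) :=
        LipschitzWith.of_dist_le_mul fun x y => by
          rw [Real.dist_eq, Real.dist_eq, ← mul_sub, abs_mul,
            Real.coe_toNNReal _ (abs_nonneg _)]
      have h3 : LipschitzWith (Real.toNNReal |c t| * 1) (fun p : ℝ × ℝ => c t * p.1) :=
        h2.comp (LipschitzWith.prod_fst : LipschitzWith 1 (Prod.fst : ℝ × ℝ → ℝ))
      have h4 : LipschitzWith (max 1 (Real.toNNReal |c t| * 1))
          (fun p : ℝ × ℝ => (p.2, c t * p.1)) :=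
        (LipschitzWith.prod_snd : LipschitzWith 1 (Prod.snd : ℝ × ℝ → ℝ)).prodMk h3
      apply h4.weaken
      rw [← NNReal.coe_le_coe]
      push_cast
      have h5 : (0:ℝ) ≤ max 1 C := le_trans zero_le_one (le_max_left _ _)
      rw [Real.coe_toNNReal _ (abs_nonneg _), Real.coe_toNNReal _ h5]
      have := hcb t
      rcases le_total (1:ℝ) (|c t| * 1) with h | h
      · rw [max_eq_right h, mul_one]
        exact (hcb t).trans (le_max_right 1 C)
      · rw [max_eq_left h]
        exact le_max_left 1 C
    set f : ℝ → ℝ × ℝ := fun t => (w t, deriv F (u t)) with hf_def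
    have hf_cont : Continuous f :=
      hw_cd.continuous.prodMk (hF'_cd.continuous.comp hu.continuous)
    have hf' : ∀ t ∈ Ioo a b, HasDerivAt f (v t (f t)) t := by
      intro t ht
      have : v t (f t) = (deriv F (u t), deriv (deriv F) (u t) * w t) := by
        simp only [hv_def, hf_def, hc_def, hcl_id t (Ioo_subset_Icc_self ht)]
      rw [this]
      exact (hwd' t).prodMk (hF'u t)
    have hg' : ∀ t ∈ Ioo a b, HasDerivAt (fun _ : ℝ => ((0:ℝ), (0:ℝ))) (v t (0, 0)) t := by
      intro t ht
      have : v t ((0:ℝ), (0:ℝ)) = (0, 0) := by simp [hv_def]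
      rw [this]
      exact hasDerivAt_const t _
    have hfx₁ : f x₁ = ((0:ℝ), (0:ℝ)) := by
      simp [hf_def, hx1, hdF0]
    have huniq := ODE_solution_unique_of_mem_Icc (s := fun _ => (univ : Set (ℝ × ℝ)))
      (fun t _ => (hlip t).lipschitzOnWith) hx₁ab hf_cont.continuousOn hf'
      (fun _ _ => mem_univ _) continuousOn_const hg' (fun _ _ => mem_univ _) hfx₁
    have := huniq hx₀ab
    simp only [hf_def] at this
    exact hne (congrArg Prod.fst this)
  refine ⟨key, ?_⟩
  have hw_cont : Continuous w := hw_cd.continuous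
  rcases lt_or_gt_of_ne hne with hneg | hpos
  · right
    apply strictAnti_of_deriv_neg
    intro x
    rcases lt_or_gt_of_ne (key x) with h | h
    · exact h
    · exfalso
      have h0 : (0:ℝ) ∈ Icc (w x₀) (w x) := ⟨le_of_lt hneg, le_of_lt h⟩
      obtain ⟨y, hy⟩ := intermediate_value_univ x₀ x hw_cont h0
      exact key y hy
  · left
    apply strictMono_of_deriv_pos
    intro x
    rcases lt_or_gt_of_ne (key x) with h | h
    · exfalso
      have h0 : (0:ℝ) ∈ Icc (w x) (w x₀) := ⟨le_of_lt h, le_of_lt hpos⟩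
      obtain ⟨y, hy⟩ := intermediate_value_univ x x₀ hw_cont h0
      exact key y hy
    · exact h
end
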